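/- arXiv:2010.14830 — 3 statements merged into one kernel-verified Lean document; each statement's English description precedes it below -/
import Mathlib

section
/- Let A be a C*-algebra and let a_1, …, a_n be finitely many elements of A such that a_i a_j* = 0 whenever i ≠ j. Then ‖∑_{i=1}^n a_i* a_i‖ ≤ max_{1 ≤ i ≤ n} ‖a_i‖². -/
private lemma pow_orth' {B : Type*} [Ring B] {p q : B}
    (h : p * q = 0) (m : ℕ) (hm : 1 ≤ m) : p ^ m * q ^ m = 0 := by
  obtain ⟨k, rfl⟩ : ∃ k, m = k + 1 := ⟨m - 1, by omega⟩
  rw [pow_succ, pow_succ', mul_assoc, ← mul_assoc p, h, zero_mul, mul_zero]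

private lemma sum_pow_orth' {B : Type*} [Ring B]
    {ι : Type*} (s : Finset ι) (p : ι → B)
    (h : ∀ i ∈ s, ∀ j ∈ s, i ≠ j → p i * p j = 0) (k : ℕ) :
    (∑ i ∈ s, p i) ^ (2 ^ k) = ∑ i ∈ s, p i ^ (2 ^ k) := by
  induction k with
  | zero => simp
  | succ k ih =>
    rw [pow_succ, pow_mul, ih, sq, Finset.sum_mul_sum]
    refine Finset.sum_congr rfl fun i hi => ?_
    rw [Finset.sum_eq_single i (fun j hj hji => pow_orth' (h i hi j hj (Ne.symm hji)) _
      Nat.one_le_two_pow) (fun hi' => absurd hi hi')]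
    rw [← pow_add, mul_two]

private lemma sum_orth_norm_le {B : Type*} [NormedRing B] [StarRing B] [CStarRing B]
    {ι : Type*} (s : Finset ι) (hs : s.Nonempty) (q : ι → B)
    (horth : ∀ i ∈ s, ∀ j ∈ s, i ≠ j → q i * q j = 0)
    (hsa : ∀ i ∈ s, IsSelfAdjoint (q i)) :
    ‖∑ i ∈ s, q i‖ ≤ s.sup' hs (fun i => ‖q i‖) := by
  set x : B := ∑ i ∈ s, q i with hx
  have hxsa : IsSelfAdjoint x :=
    Finset.sum_induction q _ (fun u v hu hv => hu.add hv) (by simp [IsSelfAdjoint]) hsa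
  set M : ℝ := s.sup' hs (fun i => ‖q i‖) with hM
  have hM0 : 0 ≤ M := le_trans (norm_nonneg _) (Finset.le_sup' (fun i => ‖q i‖) hs.choose_spec)
  have hqi : ∀ i ∈ s, ‖q i‖ ≤ M := fun i hi => Finset.le_sup' (fun i => ‖q i‖) hi
  have key : ∀ k : ℕ, ‖x‖ ^ (2 ^ k) ≤ (s.card : ℝ) * M ^ (2 ^ k) := by
    intro k
    have h1 : ‖x ^ (2 ^ k)‖ = ‖x‖ ^ (2 ^ k) := by
      simpa [coe_nnnorm, NNReal.coe_pow] using congrArg NNReal.toReal (hxsa.nnnorm_pow_two_pow k)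
    calc ‖x‖ ^ (2 ^ k) = ‖∑ i ∈ s, q i ^ (2 ^ k)‖ := by
          rw [← h1, hx, sum_pow_orth' s q horth]
      _ ≤ ∑ i ∈ s, ‖q i ^ (2 ^ k)‖ := norm_sum_le _ _
      _ ≤ ∑ i ∈ s, M ^ (2 ^ k) := by
          refine Finset.sum_le_sum fun i hi => ?_
          exact (norm_pow_le' _ (by positivity)).trans
            (pow_le_pow_left₀ (norm_nonneg _) (hqi i hi) _)
      _ = (s.card : ℝ) * M ^ (2 ^ k) := by rw [Finset.sum_const, nsmul_eq_mul]
  by_contra hcon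
  push_neg at hcon
  have hMpos : 0 < M := by
    rcases hM0.lt_or_eq with h | h
    · exact h
    · have hz : ∀ i ∈ s, q i = 0 := fun i hi => by
        have h2 := hqi i hi
        rw [← h] at h2
        exact norm_le_zero_iff.mp h2
      have : x = 0 := Finset.sum_eq_zero hz
      rw [this] at hcon
      simp only [norm_zero] at hcon
      linarith
  have hr : 1 < ‖x‖ / M := (one_lt_div hMpos).mpr hcon
  obtain ⟨k, hk⟩ := pow_unbounded_of_one_lt (s.card : ℝ) hr
  have hk2 : (s.card : ℝ) < (‖x‖ / M) ^ (2 ^ k) :=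
    hk.trans_le (pow_le_pow_right₀ hr.le (Nat.lt_two_pow_self (n := k)).le)
  have h3 := key k
  rw [div_pow, lt_div_iff₀ (by positivity : (0:ℝ) < M ^ (2 ^ k))] at hk2
  linarith

/-- If `a₁, …, aₙ` are elements of a C*-algebra with `aᵢ * aⱼ* = 0` for
`i ≠ j`, then `‖∑ᵢ aᵢ* * aᵢ‖ ≤ maxᵢ ‖aᵢ‖²`. -/
theorem stmt_1 {A : Type*} [NonUnitalCStarAlgebra A]
    {ι : Type*} (s : Finset ι) (hs : s.Nonempty) (a : ι → A)
    (horth : ∀ i ∈ s, ∀ j ∈ s, i ≠ j → a i * star (a j) = 0) :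
    ‖∑ i ∈ s, star (a i) * a i‖ ≤ s.sup' hs (fun i => ‖a i‖ ^ 2) := by
  set q : ι → Unitization ℂ A := fun i => ((star (a i) * a i : A) : Unitization ℂ A) with hq
  have hqorth : ∀ i ∈ s, ∀ j ∈ s, i ≠ j → q i * q j = 0 := by
    intro i hi j hj hij
    have hA : (star (a i) * a i) * (star (a j) * a j) = 0 := by
      calc (star (a i) * a i) * (star (a j) * a j)
          = star (a i) * (a i * star (a j)) * a j := by noncomm_ring
        _ = 0 := by rw [horth i hi j hj hij, mul_zero, zero_mul]
    simp only [hq, ← Unitization.inr_mul, hA, Unitization.inr_zero]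
  have hqsa : ∀ i ∈ s, IsSelfAdjoint (q i) := by
    intro i hi
    simp only [hq]
    rw [IsSelfAdjoint, ← Unitization.inr_star, star_mul, star_star]
  have h0 := sum_orth_norm_le s hs q hqorth hqsa
  have hnorm : ∀ i, ‖q i‖ = ‖a i‖ ^ 2 := fun i => by
    rw [hq]
    simp only [Unitization.norm_inr]
    rw [CStarRing.norm_star_mul_self, sq]
  have hsum : ‖∑ i ∈ s, q i‖ = ‖∑ i ∈ s, star (a i) * a i‖ := by
    have : (∑ i ∈ s, q i) = (((∑ i ∈ s, star (a i) * a i : A)) : Unitization ℂ A) := by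
      rw [hq]
      exact (map_sum (Unitization.inrNonUnitalAlgHom ℂ A) _ s).symm
    rw [this, Unitization.norm_inr]
  rw [hsum] at h0
  refine h0.trans_eq (Finset.sup'_congr hs rfl fun i _ => hnorm i)
end

section
/- Let A be a C*-algebra and b ∈ A a self-adjoint element. Then b is positive (i.e. b ≥ 0, equivalently its spectrum lies in [0,∞)) if and only if for every positive element a ∈ A one has ‖a‖ ≤ ‖a + b‖. -/
/-- A self-adjoint element `b` of a C*-algebra is positive if and only if
`‖a‖ ≤ ‖a + b‖` for every positive element `a`. -/
theorem stmt_3 {A : Type*} [NonUnitalCStarAlgebra A] [PartialOrder A] [StarOrderedRing A]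
    (b : A) (hb : IsSelfAdjoint b) :
    0 ≤ b ↔ ∀ a : A, 0 ≤ a → ‖a‖ ≤ ‖a + b‖ := by
  constructor
  · intro hb0 a ha
    exact CStarAlgebra.norm_le_norm_of_nonneg_of_le ha (le_add_of_nonneg_right hb0)
  · intro h
    by_contra hcon
    have hneg : b⁻ ≠ 0 := fun h' ↦ hcon ((CFC.negPart_eq_zero_iff b hb).mp h')
    clear hcon
    set n : ℝ := ‖b⁻‖ with hn
    set p : ℝ := ‖b⁺‖ with hp
    have hnpos : 0 < n := norm_pos_iff.mpr hneg
    set t : ℝ := 1 + p / n with ht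
    have ht1 : 1 ≤ t := le_add_of_nonneg_right (div_nonneg (norm_nonneg _) hnpos.le)
    have htn : (t - 1) * n = p := by
      rw [ht, add_sub_cancel_left]
      exact div_mul_cancel₀ p hnpos.ne'
    have ha : (0 : A) ≤ t • b⁻ :=
      smul_nonneg (by linarith) (CFC.negPart_nonneg b)
    have key := h (t • b⁻) ha
    have hrw : t • b⁻ + b = (t - 1) • b⁻ + b⁺ := by
      nth_rw 2 [← CFC.posPart_sub_negPart b hb]
      rw [sub_smul, one_smul]
      abel
    have hrw2 : (t - 1) • b⁻ + b⁺ = cfcₙ (fun x : ℝ => (t - 1) * x⁻ + x⁺) b := by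
      rw [cfcₙ_add _ _ _, CFC.posPart_def, CFC.negPart_def, ← cfcₙ_smul (t-1) _ b]
      rfl
    have hbound : ‖cfcₙ (fun x : ℝ => (t - 1) * x⁻ + x⁺) b‖ ≤ p := by
      apply norm_cfcₙ_le
      intro x hx
      have hxp : x⁺ ≤ p := by
        have := norm_apply_le_norm_cfcₙ (fun x : ℝ => x⁺) b hx
        rw [← CFC.posPart_def] at this
        calc x⁺ ≤ ‖x⁺‖ := le_abs_self _
        _ ≤ p := this
      have hxn : x⁻ ≤ n := by
        have := norm_apply_le_norm_cfcₙ (fun x : ℝ => x⁻) b hx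
        rw [← CFC.negPart_def] at this
        calc x⁻ ≤ ‖x⁻‖ := le_abs_self _
        _ ≤ n := this
      rcases le_total x 0 with hx0 | hx0
      · have : x⁺ = 0 := posPart_eq_zero.mpr hx0
        rw [Real.norm_eq_abs, this, add_zero, abs_of_nonneg
          (mul_nonneg (by linarith) (negPart_nonneg _))]
        calc (t - 1) * x⁻ ≤ (t - 1) * n :=
              mul_le_mul_of_nonneg_left hxn (by linarith)
          _ = p := htn
      · have : x⁻ = 0 := negPart_eq_zero.mpr hx0
        rw [Real.norm_eq_abs, this, mul_zero, zero_add,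
          abs_of_nonneg (posPart_nonneg _)]
        exact hxp
    have hL : ‖t • b⁻‖ = t * n := by
      rw [norm_smul, Real.norm_eq_abs, abs_of_nonneg (by linarith)]
    have : t * n ≤ (t - 1) * n := by
      rw [htn]
      calc t * n = ‖t • b⁻‖ := hL.symm
        _ ≤ ‖t • b⁻ + b‖ := key
        _ = _ := by rw [hrw, hrw2]
        _ ≤ p := hbound
    nlinarith
end

section
/- Let A be a C*-algebra and let L, R : A → A be ℂ-linear maps satisfying L(ab) = L(a) b, R(ab) = a R(b), and a L(b) = R(a) b for all a, b ∈ A. Then L and R are automatically bounded linear operators. -/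
private lemma stmt5_aux {A : Type*} [NonUnitalCStarAlgebra A]
    (L R : A →ₗ[ℂ] A)
    (hLR : ∀ a b : A, a * L b = R a * b) :
    Continuous L ∧ Continuous R := by
  constructor
  · apply LinearMap.continuous_of_isClosed_graph
    apply IsSeqClosed.isClosed
    intro u p hu hup
    rw [SetLike.mem_coe, LinearMap.mem_graph_iff]
    have h1 : Filter.Tendsto (fun n => u n |>.1) Filter.atTop (nhds p.1) :=
      (continuous_fst.tendsto p).comp hup
    have h2 : Filter.Tendsto (fun n => L (u n).1) Filter.atTop (nhds p.2) := by
      have := (continuous_snd.tendsto p).comp hup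
      refine this.congr fun n => ?_
      exact (L.mem_graph_iff (u n)).mp (hu n)
    have key : ∀ h : A, h * p.2 = h * L p.1 := by
      intro h
      have t1 : Filter.Tendsto (fun n => h * L (u n).1) Filter.atTop (nhds (h * p.2)) :=
        (tendsto_const_nhds.mul h2)
      have t2 : Filter.Tendsto (fun n => h * L (u n).1) Filter.atTop (nhds (h * L p.1)) := by
        have : Filter.Tendsto (fun n => R h * (u n).1) Filter.atTop (nhds (R h * p.1)) :=
          tendsto_const_nhds.mul h1
        rw [hLR]
        exact this.congr fun n => (hLR h _).symm
      exact tendsto_nhds_unique t1 t2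
    have hz : star (p.2 - L p.1) * (p.2 - L p.1) = 0 := by
      rw [mul_sub, key, sub_self]
    rw [CStarRing.star_mul_self_eq_zero_iff] at hz
    exact sub_eq_zero.mp hz
  · apply LinearMap.continuous_of_isClosed_graph
    apply IsSeqClosed.isClosed
    intro u p hu hup
    rw [SetLike.mem_coe, LinearMap.mem_graph_iff]
    have h1 : Filter.Tendsto (fun n => u n |>.1) Filter.atTop (nhds p.1) :=
      (continuous_fst.tendsto p).comp hup
    have h2 : Filter.Tendsto (fun n => R (u n).1) Filter.atTop (nhds p.2) := by
      have := (continuous_snd.tendsto p).comp hup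
      refine this.congr fun n => ?_
      exact (R.mem_graph_iff (u n)).mp (hu n)
    have key : ∀ b : A, p.2 * b = R p.1 * b := by
      intro b
      have t1 : Filter.Tendsto (fun n => R (u n).1 * b) Filter.atTop (nhds (p.2 * b)) :=
        h2.mul tendsto_const_nhds
      have t2 : Filter.Tendsto (fun n => R (u n).1 * b) Filter.atTop (nhds (R p.1 * b)) := by
        have : Filter.Tendsto (fun n => (u n).1 * L b) Filter.atTop (nhds (p.1 * L b)) :=
          h1.mul tendsto_const_nhds
        rw [← hLR]
        exact this.congr fun n => hLR _ b
      exact tendsto_nhds_unique t1 t2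
    have hz : (p.2 - R p.1) * star (p.2 - R p.1) = 0 := by
      rw [sub_mul, key, sub_self]
    rw [CStarRing.mul_star_self_eq_zero_iff] at hz
    exact sub_eq_zero.mp hz

/-- An algebraic double centralizer `(L, R)` of a C*-algebra consists
automatically of bounded linear maps. -/
theorem stmt_5 {A : Type*} [NonUnitalCStarAlgebra A]
    (L R : A →ₗ[ℂ] A)
    (hL : ∀ a b : A, L (a * b) = L a * b)
    (hR : ∀ a b : A, R (a * b) = a * R b)
    (hLR : ∀ a b : A, a * L b = R a * b) :
    (∃ C : ℝ, ∀ a : A, ‖L a‖ ≤ C * ‖a‖) ∧ (∃ C : ℝ, ∀ a : A, ‖R a‖ ≤ C * ‖a‖) := by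
  obtain ⟨hLc, hRc⟩ := stmt5_aux L R hLR
  constructor
  · obtain ⟨C, _, h⟩ := SemilinearMapClass.bound_of_continuous L hLc
    exact ⟨C, h⟩
  · obtain ⟨C, _, h⟩ := SemilinearMapClass.bound_of_continuous R hRc
    exact ⟨C, h⟩
end
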